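/- (Interpolation operator 𝓘_{K_t}, Theorem 4.3) Let k ≥ 1 be an integer, a < b real numbers, and v : [a,b] → ℝ continuously differentiable. Then there exists a unique polynomial p of degree at most k such that p(a) = v(a), p(b) = v(b), and ∫_a^b (v′(s) − p′(s)) q(s) ds = 0 for every polynomial q of degree at most k−1 (i.e., p′ is the L²(a,b)-orthogonal projection of v′ onto ℙ_{k−1}). Moreover, this p satisfies the best-approximation property ∫_a^b (v′(s) − p′(s))² ds ≤ ∫_a^b (v′(s) − r′(s))² ds for every polynomial r of degree at most k. -/

import Mathlib

open MeasureTheory Set Polynomial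

noncomputable def antider (q : ℝ[X]) : ℝ[X] :=
  q.sum fun n c => C (c / (n + 1)) * X ^ (n + 1)

lemma derivative_antider (q : ℝ[X]) : derivative (antider q) = q := by
  conv_rhs => rw [← q.sum_C_mul_X_pow_eq]
  unfold antider Polynomial.sum
  rw [map_sum]
  refine Finset.sum_congr rfl fun n _ => ?_
  rw [derivative_C_mul, derivative_X_pow]
  rw [Nat.add_sub_cancel, ← mul_assoc, ← C_mul]
  show _ = C (q.coeff n) * X ^ n
  congr 1
  rw [div_mul_eq_mul_div, mul_div_assoc]
  push_cast
  rw [div_self (by positivity), mul_one]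

lemma degree_antider_le {k : ℕ} (q : ℝ[X]) (hq : q.degree < (k : ℕ)) :
    (antider q).degree ≤ (k : ℕ) := by
  unfold antider Polynomial.sum
  refine (Polynomial.degree_sum_le _ _).trans ?_
  rw [Finset.sup_le_iff]
  intro n hn
  refine (degree_C_mul_X_pow_le _ _).trans ?_
  have hn' : (n : WithBot ℕ) < (k : ℕ) := lt_of_le_of_lt (le_degree_of_ne_zero
    (mem_support_iff.mp hn)) hq
  exact_mod_cast Nat.cast_le.mpr (by exact_mod_cast hn' : n < k)

lemma poly_eq_zero_of_integral_sq {a b : ℝ} (hab : a < b) (q : ℝ[X])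
    (h : ∫ s in a..b, q.eval s * q.eval s = 0) : q = 0 := by
  by_contra hq
  have hint : IntervalIntegrable (fun s => q.eval s * q.eval s) volume a b :=
    ((q.continuous_aeval).mul q.continuous_aeval).intervalIntegrable _ _
  have hpos : 0 < ∫ s in a..b, q.eval s * q.eval s := by
    rw [intervalIntegral.integral_pos_iff_support_of_nonneg_ae
      (Filter.Eventually.of_forall fun x => mul_self_nonneg _) hint]
    refine ⟨hab, ?_⟩
    have hroots : {x | q.IsRoot x}.Finite := q.finite_setOf_isRoot hq
    have hsub : Ioc a b ⊆
        (Function.support (fun s => q.eval s * q.eval s) ∩ Ioc a b) ∪ {x | q.IsRoot x} := by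
      intro x hx
      by_cases h0 : q.eval x = 0
      · exact Or.inr h0
      · exact Or.inl ⟨mul_ne_zero h0 h0, hx⟩
    have hle := (measure_mono (μ := volume) hsub).trans (measure_union_le _ _)
    rw [hroots.measure_zero, add_zero, Real.volume_Ioc] at hle
    exact lt_of_lt_of_le (ENNReal.ofReal_pos.mpr (by linarith)) hle
  linarith

/-- Interpolation operator `𝓘_{K_t}` (Theorem 4.3): for `C¹` functions `v` on `[a,b]` there is
a unique polynomial `p` of degree `≤ k` with `p(a) = v(a)`, `p(b) = v(b)` whose derivative is
the `L²(a,b)`-orthogonal projection of `v'` onto `ℙ_{k−1}`; moreover `p'` is the best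
`L²(a,b)`-approximation of `v'` among derivatives of polynomials of degree `≤ k`. -/
theorem interpolation_in_time (k : ℕ) (hk : 1 ≤ k) (a b : ℝ) (hab : a < b)
    (v : ℝ → ℝ) (hv : ContDiffOn ℝ 1 v (Set.Icc a b)) :
    ∃ p : Polynomial ℝ,
      (p.degree ≤ (k : ℕ) ∧ p.eval a = v a ∧ p.eval b = v b ∧
        ∀ q : Polynomial ℝ, q.degree ≤ (k - 1 : ℕ) →
          ∫ s in a..b,
            (derivWithin v (Set.Icc a b) s - p.derivative.eval s) * q.eval s = 0) ∧
      (∀ r : Polynomial ℝ, r.degree ≤ (k : ℕ) →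
          (∫ s in a..b, (derivWithin v (Set.Icc a b) s - p.derivative.eval s) ^ 2) ≤
            ∫ s in a..b, (derivWithin v (Set.Icc a b) s - r.derivative.eval s) ^ 2) ∧
      (∀ p' : Polynomial ℝ,
        (p'.degree ≤ (k : ℕ) ∧ p'.eval a = v a ∧ p'.eval b = v b ∧
          ∀ q : Polynomial ℝ, q.degree ≤ (k - 1 : ℕ) →
            ∫ s in a..b,
              (derivWithin v (Set.Icc a b) s - p'.derivative.eval s) * q.eval s = 0) →
        p' = p) := by
  set g : ℝ → ℝ := derivWithin v (Set.Icc a b) with hg_def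
  have hvc : ContinuousOn v (Icc a b) := hv.continuousOn
  have hgc : ContinuousOn g (Icc a b) := hv.continuousOn_derivWithin (uniqueDiffOn_Icc hab) le_rfl
  have hPc : ∀ P : ℝ[X], ContinuousOn (fun s => P.eval s) (Icc a b) := fun P =>
    P.continuous_aeval.continuousOn
  have hInt : ∀ f : ℝ → ℝ, ContinuousOn f (Icc a b) → IntervalIntegrable f volume a b :=
    fun f hf => hf.intervalIntegrable_of_Icc hab.le
  have hgi : IntervalIntegrable g volume a b := hInt _ hgc
  -- FTC for v
  have hFTCv : ∫ s in a..b, g s = v b - v a := by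
    apply intervalIntegral.integral_eq_sub_of_hasDeriv_right_of_le hab.le hvc ?_ hgi
    intro x hx
    have hd : DifferentiableWithinAt ℝ v (Icc a b) x :=
      (hv.differentiableOn one_ne_zero) x (Ioo_subset_Icc_self hx)
    exact (hd.hasDerivWithinAt.hasDerivAt (Icc_mem_nhds hx.1 hx.2)).hasDerivWithinAt
  -- FTC for polynomials
  have hFTCp : ∀ P : ℝ[X], ∫ s in a..b, P.derivative.eval s = P.eval b - P.eval a := fun P =>
    intervalIntegral.integral_eq_sub_of_hasDerivAt (fun x _ => P.hasDerivAt x) (hInt _ (hPc _))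
  haveI : FiniteDimensional ℝ (Polynomial.degreeLT ℝ k) :=
    LinearEquiv.finiteDimensional (Polynomial.degreeLTEquiv ℝ k).symm
  -- the bilinear form
  set B : LinearMap.BilinForm ℝ (Polynomial.degreeLT ℝ k) :=
    LinearMap.mk₂ ℝ (fun q r => ∫ s in a..b, (q : ℝ[X]).eval s * (r : ℝ[X]).eval s)
      (fun q q' r => by
        simp only [Submodule.coe_add, Polynomial.eval_add, add_mul]
        exact intervalIntegral.integral_add (hInt _ ((hPc _).mul (hPc _)))
          (hInt _ ((hPc _).mul (hPc _))))
      (fun c q r => by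
        simp only [SetLike.val_smul, Polynomial.eval_smul, smul_eq_mul, mul_assoc]
        exact intervalIntegral.integral_const_mul _ _)
      (fun q r r' => by
        simp only [Submodule.coe_add, Polynomial.eval_add, mul_add]
        exact intervalIntegral.integral_add (hInt _ ((hPc _).mul (hPc _)))
          (hInt _ ((hPc _).mul (hPc _))))
      (fun c q r => by
        simp only [SetLike.val_smul, Polynomial.eval_smul, smul_eq_mul, mul_left_comm]
        exact intervalIntegral.integral_const_mul _ _) with hB_def
  have hB : B.Nondegenerate := by
    refine ⟨fun q hq => ?_, fun q hq => ?_⟩ <;>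
    · have h0 := hq q
      simp only [hB_def, LinearMap.mk₂_apply] at h0
      exact Subtype.ext (poly_eq_zero_of_integral_sq hab _ h0)
  set L : Module.Dual ℝ (Polynomial.degreeLT ℝ k) :=
    { toFun := fun r => ∫ s in a..b, g s * (r : ℝ[X]).eval s
      map_add' := fun r r' => by
        simp only [Submodule.coe_add, Polynomial.eval_add, mul_add]
        exact intervalIntegral.integral_add (hInt _ (hgc.mul (hPc _)))
          (hInt _ (hgc.mul (hPc _)))
      map_smul' := fun c r => by
        simp only [SetLike.val_smul, Polynomial.eval_smul, smul_eq_mul, mul_left_comm,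
          RingHom.id_apply]
        exact intervalIntegral.integral_const_mul _ _ } with hL_def
  set qs : Polynomial.degreeLT ℝ k := (B.toDual hB).symm L with hqs
  have horth : ∀ r : Polynomial.degreeLT ℝ k,
      ∫ s in a..b, (g s - (qs : ℝ[X]).eval s) * (r : ℝ[X]).eval s = 0 := by
    intro r
    have h1 : B qs r = L r :=
      LinearMap.BilinForm.apply_toDual_symm_apply (B := B) (hB := hB) L r
    have h2 : ∫ s in a..b, (qs : ℝ[X]).eval s * (r : ℝ[X]).eval s
        = ∫ s in a..b, g s * (r : ℝ[X]).eval s := by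
      simpa only [hB_def, hL_def, LinearMap.mk₂_apply, LinearMap.coe_mk, AddHom.coe_mk] using h1
    simp only [sub_mul]
    rw [intervalIntegral.integral_sub (hInt (fun s => g s * (r : ℝ[X]).eval s) (hgc.mul (hPc _)))
      (hInt (fun s => (qs : ℝ[X]).eval s * (r : ℝ[X]).eval s) ((hPc _).mul (hPc _))), h2, sub_self]
  have hqdeg : (qs : ℝ[X]).degree < (k : ℕ) := Polynomial.mem_degreeLT.mp qs.2
  set P : ℝ[X] := antider (qs : ℝ[X]) with hP_def
  set p : ℝ[X] := Polynomial.C (v a - P.eval a) + P with hp_def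
  have hderiv : p.derivative = (qs : ℝ[X]) := by
    simp [hp_def, hP_def, derivative_antider]
  have hpa : p.eval a = v a := by
    simp only [hp_def, Polynomial.eval_add, Polynomial.eval_C]
    ring
  have hone : (1 : ℝ[X]) ∈ Polynomial.degreeLT ℝ k := by
    rw [Polynomial.mem_degreeLT, Polynomial.degree_one]
    exact_mod_cast hk
  have hIqs : ∫ s in a..b, (qs : ℝ[X]).eval s = v b - v a := by
    have h1 := horth ⟨1, hone⟩
    simp only [Polynomial.eval_one, mul_one] at h1
    rw [intervalIntegral.integral_sub hgi (hInt _ (hPc _)), sub_eq_zero] at h1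
    rw [← h1, hFTCv]
  have hpb : p.eval b = v b := by
    have h := hFTCp p
    rw [hderiv, hIqs, hpa] at h
    linarith
  have hpdeg : p.degree ≤ (k : ℕ) := by
    refine (Polynomial.degree_add_le _ _).trans (max_le ?_ (degree_antider_le _ hqdeg))
    exact Polynomial.degree_C_le.trans (by exact_mod_cast Nat.zero_le k)
  have hmem : ∀ q : ℝ[X], q.degree ≤ ((k - 1 : ℕ) : WithBot ℕ) →
      q ∈ Polynomial.degreeLT ℝ k := by
    intro q hq
    rw [Polynomial.mem_degreeLT]
    exact hq.trans_lt (by exact_mod_cast Nat.sub_lt hk Nat.one_pos)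
  have hderivmem : ∀ r : ℝ[X], r.degree ≤ ((k : ℕ) : WithBot ℕ) →
      r.derivative ∈ Polynomial.degreeLT ℝ k := by
    intro r hr
    rw [Polynomial.mem_degreeLT]
    rcases eq_or_ne r 0 with rfl | h0
    · simp
    · exact (Polynomial.degree_derivative_lt h0).trans_le hr
  have horth' : ∀ q : ℝ[X], q.degree ≤ ((k - 1 : ℕ) : WithBot ℕ) →
      ∫ s in a..b, (g s - p.derivative.eval s) * q.eval s = 0 := by
    intro q hq
    rw [hderiv]
    exact horth ⟨q, hmem q hq⟩
  refine ⟨p, ⟨hpdeg, hpa, hpb, horth'⟩, ?_, ?_⟩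
  · -- best approximation
    intro r hr
    set d : ℝ[X] := p.derivative - r.derivative with hd_def
    have hdmem : d ∈ Polynomial.degreeLT ℝ k :=
      Submodule.sub_mem _ (by rw [hderiv]; exact qs.2) (hderivmem r hr)
    have hzero : ∫ s in a..b, (g s - p.derivative.eval s) * d.eval s = 0 := by
      rw [hderiv]; exact horth ⟨d, hdmem⟩
    have key : EqOn (fun s => (g s - r.derivative.eval s) ^ 2)
        (fun s => (g s - p.derivative.eval s) ^ 2 +
          (2 * ((g s - p.derivative.eval s) * d.eval s) + d.eval s * d.eval s))
        (uIcc a b) := by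
      intro s _
      simp only [hd_def, Polynomial.eval_sub]
      ring
    rw [intervalIntegral.integral_congr key]
    have hc1 : ContinuousOn (fun s => (g s - p.derivative.eval s) ^ 2) (Icc a b) :=
      (hgc.sub (hPc _)).pow 2
    have hc2 : ContinuousOn (fun s => 2 * ((g s - p.derivative.eval s) * d.eval s)) (Icc a b) :=
      (continuous_const.continuousOn.mul ((hgc.sub (hPc _)).mul (hPc _)))
    have hc3 : ContinuousOn (fun s => d.eval s * d.eval s) (Icc a b) := (hPc _).mul (hPc _)
    rw [intervalIntegral.integral_add (hInt _ hc1) ((hInt _ hc2).add (hInt _ hc3)),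
        intervalIntegral.integral_add (hInt _ hc2) (hInt _ hc3)]
    have h2 : ∫ s in a..b, 2 * ((g s - p.derivative.eval s) * d.eval s) = 0 := by
      rw [intervalIntegral.integral_const_mul, hzero, mul_zero]
    have h3 : 0 ≤ ∫ s in a..b, d.eval s * d.eval s :=
      intervalIntegral.integral_nonneg hab.le fun u _ => mul_self_nonneg _
    linarith
  · rintro p' ⟨hd', ha', hb', horthp'⟩
    set d : ℝ[X] := p'.derivative - (qs : ℝ[X]) with hd_def
    have hdmem : d ∈ Polynomial.degreeLT ℝ k :=
      Submodule.sub_mem _ (hderivmem p' hd') qs.2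
    have hdle : d.degree ≤ ((k - 1 : ℕ) : WithBot ℕ) := by
      rcases eq_or_ne d 0 with h0 | h0
      · rw [h0, Polynomial.degree_zero]; exact bot_le
      · have hlt : d.degree < ((k : ℕ) : WithBot ℕ) := Polynomial.mem_degreeLT.mp hdmem
        rw [Polynomial.degree_eq_natDegree h0] at hlt ⊢
        exact_mod_cast Nat.le_sub_one_of_lt (by exact_mod_cast hlt)
    have h1 := horthp' d hdle
    have h2 : ∫ s in a..b, (g s - (qs : ℝ[X]).eval s) * d.eval s = 0 := horth ⟨d, hdmem⟩
    have hdd : ∫ s in a..b, d.eval s * d.eval s = 0 := by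
      have key : EqOn (fun s => d.eval s * d.eval s)
          (fun s => (g s - (qs : ℝ[X]).eval s) * d.eval s
            - (g s - p'.derivative.eval s) * d.eval s) (uIcc a b) := by
        intro s _
        simp only [hd_def, Polynomial.eval_sub]
        ring
      rw [intervalIntegral.integral_congr key,
        intervalIntegral.integral_sub
          (hInt (fun s => (g s - (qs : ℝ[X]).eval s) * d.eval s) ((hgc.sub (hPc _)).mul (hPc _)))
          (hInt (fun s => (g s - p'.derivative.eval s) * d.eval s) ((hgc.sub (hPc _)).mul (hPc _))),
          h1, h2, sub_zero]
    have hd0 : d = 0 := poly_eq_zero_of_integral_sq hab _ hdd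
    have hderiv' : Polynomial.derivative p' = Polynomial.derivative p := by
      rw [hderiv]
      exact sub_eq_zero.mp hd0
    have hcd : Polynomial.derivative (p' - p) = 0 := by
      rw [Polynomial.derivative_sub, hderiv', sub_self]
    have hC := Polynomial.eq_C_of_derivative_eq_zero hcd
    have heval : (p' - p).eval a = 0 := by
      simp [Polynomial.eval_sub, ha', hpa]
    rw [hC, Polynomial.eval_C] at heval
    have hfin : p' - p = 0 := by rw [hC, heval, Polynomial.C_0]
    exact sub_eq_zero.mp hfin
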